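/- Let μ be a probability measure on F_m, let g ∈ F_m \ {e}, and let B ⊆ F_m be a g-barrier. Then for every h ∈ C_fin(g) one has F_μ(e, h) = Σ_{b ∈ B} F_μ(e, b; B \ {b}) · F_μ(b, h). -/

import Mathlib

open scoped BigOperators

/-- Restricted first-passage function `F_μ(x, y; S)`: the total weight of paths from `x`
to `y` that avoid `S ∪ {y}` before arriving at `y`. -/
noncomputable def FP {G : Type*} [Group G] (μ : G → ℝ) (x y : G) (S : Set G) : ℝ :=
  ∑' k : ℕ,
    ∑' f : {f : Fin (k + 1) → G // f 0 = x ∧ f (Fin.last k) = y ∧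
        ∀ j : Fin k, f j.castSucc ∉ S ∪ {y}},
      ∏ j : Fin k, μ ((f.1 j.castSucc)⁻¹ * f.1 j.succ)

/-- `μ` is a probability measure on `G`. -/
def IsProb {G : Type*} (μ : G → ℝ) : Prop := (∀ g, 0 ≤ μ g) ∧ ∑' g, μ g = 1

/-- Word length in the free group on `Fin m` w.r.t. the generators and their inverses. -/
def wl {m : ℕ} (g : FreeGroup (Fin m)) : ℕ := g.toWord.length

/-- The shadow `C_fin(g) = {g·x : |g·x| = |g| + |x|}`. -/
def Cfin {m : ℕ} (g : FreeGroup (Fin m)) : Set (FreeGroup (Fin m)) :=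
  {h | ∃ x, h = g * x ∧ wl (g * x) = wl g + wl x}

/-- `B` is a `g`-barrier: no path from `e` can reach the shadow of `g` avoiding `B`. -/
def IsBarrier {m : ℕ} (μ : FreeGroup (Fin m) → ℝ) (g : FreeGroup (Fin m))
    (B : Set (FreeGroup (Fin m))) : Prop :=
  ∀ h ∈ Cfin g, FP μ 1 h B = 0

open scoped ENNReal

set_option linter.unusedSectionVars false
set_option linter.unusedVariables false

namespace Stmt7Aux

variable {G : Type*} [Group G]

/-- weight of a list of steps -/
noncomputable def W (ν : G → ℝ≥0∞) (ℓ : List G) : ℝ≥0∞ := (ℓ.map ν).prod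

/-- position after `i` steps starting at `x` -/
def pos (x : G) (ℓ : List G) (i : ℕ) : G := x * (ℓ.take i).prod

/-- a good path from x to y avoiding S ∪ {y} strictly before the end -/
def Good (x y : G) (S : Set G) (ℓ : List G) : Prop :=
  x * ℓ.prod = y ∧ ∀ i < ℓ.length, pos x ℓ i ∉ S ∪ {y}

noncomputable def LF (ν : G → ℝ≥0∞) (x y : G) (S : Set G) : ℝ≥0∞ :=
  ∑' ℓ : {ℓ : List G // Good x y S ℓ}, W ν ℓ

@[simp] lemma W_nil (ν : G → ℝ≥0∞) : W ν [] = 1 := rfl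

@[simp] lemma W_cons (ν : G → ℝ≥0∞) (a : G) (ℓ : List G) : W ν (a :: ℓ) = ν a * W ν ℓ := by
  simp [W]

@[simp] lemma W_append (ν : G → ℝ≥0∞) (p q : List G) : W ν (p ++ q) = W ν p * W ν q := by
  simp [W]

lemma W_ofFn (ν : G → ℝ≥0∞) {k : ℕ} (s : Fin k → G) :
    W ν (List.ofFn s) = ∏ j : Fin k, ν (s j) := by
  simp [W, List.map_ofFn, List.prod_ofFn]

lemma W_ne_top (ν : G → ℝ≥0∞) (hν : ∀ g, ν g ≠ ∞) (ℓ : List G) : W ν ℓ ≠ ∞ := by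
  induction ℓ with
  | nil => simp
  | cons a t ih => simpa using ENNReal.mul_ne_top (hν a) ih

@[simp] lemma pos_zero (x : G) (ℓ : List G) : pos x ℓ 0 = x := by simp [pos]

lemma pos_length (x : G) (ℓ : List G) : pos x ℓ ℓ.length = x * ℓ.prod := by simp [pos]

lemma pos_take (x : G) (ℓ : List G) {i j : ℕ} (h : i ≤ j) :
    pos x (ℓ.take j) i = pos x ℓ i := by
  simp [pos, List.take_take, Nat.min_eq_left h]

lemma pos_succ (x : G) (ℓ : List G) {i : ℕ} (h : i < ℓ.length) :
    pos x ℓ (i + 1) = pos x ℓ i * ℓ.get ⟨i, h⟩ := by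
  simp [pos, List.prod_take_succ _ _ h, mul_assoc]

lemma pos_append_left (x : G) {p : List G} (q : List G) {i : ℕ} (h : i ≤ p.length) :
    pos x (p ++ q) i = pos x p i := by
  simp [pos, List.take_append_of_le_length h]

lemma pos_append_right (x : G) (p q : List G) (i : ℕ) :
    pos x (p ++ q) (p.length + i) = pos (x * p.prod) q i := by
  simp [pos, List.take_add, List.take_left, List.drop_left, List.prod_append, mul_assoc]

lemma pos_drop (x : G) (ℓ : List G) (j i : ℕ) :
    pos (pos x ℓ j) (ℓ.drop j) i = pos x ℓ (j + i) := by
  simp [pos, List.take_add, mul_assoc]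


section Slice

variable (x y : G) (S : Set G)

/-- the subtype used in the definition of `FP` -/
def FPsub (k : ℕ) := {f : Fin (k + 1) → G // f 0 = x ∧ f (Fin.last k) = y ∧
    ∀ j : Fin k, f j.castSucc ∉ S ∪ {y}}

variable {x y S}

def steps {k : ℕ} (f : Fin (k + 1) → G) : Fin k → G :=
  fun j => (f j.castSucc)⁻¹ * f j.succ

lemma pos_ofFn_steps {k : ℕ} (f : Fin (k + 1) → G) (hx : f 0 = x) :
    ∀ i : ℕ, (hi : i ≤ k) → pos x (List.ofFn (steps f)) i = f ⟨i, Nat.lt_succ_of_le hi⟩ := by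
  intro i
  induction i with
  | zero => intro _; simpa using hx.symm
  | succ i ih =>
    intro hi
    have hik : i < k := hi
    have hlen : i < (List.ofFn (steps f)).length := by simpa using hik
    rw [pos_succ x _ hlen, ih (le_of_lt hik)]
    have hget : (List.ofFn (steps f)).get ⟨i, hlen⟩ = steps f ⟨i, hik⟩ := by
      rw [List.get_ofFn]; rfl
    rw [hget]
    show f _ * ((f (Fin.castSucc ⟨i, hik⟩))⁻¹ * f (Fin.succ ⟨i, hik⟩)) = f _
    have h1 : Fin.castSucc ⟨i, hik⟩ = (⟨i, Nat.lt_succ_of_le (le_of_lt hik)⟩ : Fin (k+1)) := rfl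
    have h2 : Fin.succ ⟨i, hik⟩ = (⟨i + 1, Nat.lt_succ_of_le hi⟩ : Fin (k+1)) := rfl
    rw [h1, h2, mul_inv_cancel_left]

/-- paths of length `k` as lists -/
def sliceEquiv (x y : G) (S : Set G) (k : ℕ) :
    FPsub x y S k ≃ {ℓ : List G // ℓ.length = k ∧ Good x y S ℓ} where
  toFun f := by
    refine ⟨List.ofFn (steps f.1), by simp, ?_, ?_⟩
    · have := pos_ofFn_steps f.1 f.2.1 k le_rfl
      have hlen : (List.ofFn (steps f.1)).length = k := by simp
      rw [← pos_length, hlen, this]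
      exact f.2.2.1
    · intro i hi
      have hik : i < k := by simpa using hi
      rw [pos_ofFn_steps f.1 f.2.1 i (le_of_lt hik)]
      exact f.2.2.2 ⟨i, hik⟩
  invFun ℓ := by
    refine ⟨fun i => pos x ℓ.1 i, by simp, ?_, ?_⟩
    · show pos x ℓ.1 k = y
      have h1 : pos x ℓ.1 ℓ.1.length = pos x ℓ.1 k := congrArg (pos x ℓ.1) ℓ.2.1
      rw [← h1, pos_length]
      exact ℓ.2.2.1
    · intro j
      show pos x ℓ.1 j.1 ∉ S ∪ {y}
      exact ℓ.2.2.2 j.1 (by rw [ℓ.2.1]; exact j.2)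
  left_inv f := by
    apply Subtype.ext
    funext i
    exact pos_ofFn_steps f.1 f.2.1 i.1 (Nat.lt_succ_iff.mp i.2)
  right_inv ℓ := by
    apply Subtype.ext
    apply List.ext_get (by simp [ℓ.2.1])
    intro i h1 h2
    have hik : i < k := by simpa using h1
    have hil : i < ℓ.1.length := by rw [ℓ.2.1]; exact hik
    rw [List.get_ofFn]
    show (pos x ℓ.1 i)⁻¹ * pos x ℓ.1 (i + 1) = _
    rw [pos_succ x ℓ.1 hil, inv_mul_cancel_left]

lemma slice_tsum (ν : G → ℝ≥0∞) (x y : G) (S : Set G) (k : ℕ) :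
    ∑' f : FPsub x y S k, ∏ j : Fin k, ν ((f.1 j.castSucc)⁻¹ * f.1 j.succ)
      = ∑' ℓ : {ℓ : List G // ℓ.length = k ∧ Good x y S ℓ}, W ν ℓ.1 := by
  rw [← Equiv.tsum_eq (sliceEquiv x y S k) (fun ℓ => W ν ℓ.1)]
  refine tsum_congr fun f => ?_
  rw [show ((sliceEquiv x y S k) f).1 = List.ofFn (steps f.1) from rfl, W_ofFn]
  rfl

/-- the `ℝ≥0∞`-valued analogue of `FP`, sliced by length -/
noncomputable def EFP (ν : G → ℝ≥0∞) (x y : G) (S : Set G) : ℝ≥0∞ :=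
  ∑' k : ℕ, ∑' f : FPsub x y S k, ∏ j : Fin k, ν ((f.1 j.castSucc)⁻¹ * f.1 j.succ)

def lenEquiv (x y : G) (S : Set G) (k : ℕ) :
    {p : {ℓ : List G // Good x y S ℓ} // p.1.length = k} ≃
      {ℓ : List G // ℓ.length = k ∧ Good x y S ℓ} where
  toFun p := ⟨p.1.1, p.2, p.1.2⟩
  invFun q := ⟨⟨q.1, q.2.2⟩, q.2.1⟩
  left_inv p := rfl
  right_inv q := rfl

lemma EFP_eq_LF (ν : G → ℝ≥0∞) (x y : G) (S : Set G) : EFP ν x y S = LF ν x y S := by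
  calc EFP ν x y S
      = ∑' k, ∑' ℓ : {ℓ : List G // ℓ.length = k ∧ Good x y S ℓ}, W ν ℓ.1 :=
        tsum_congr (fun k => slice_tsum ν x y S k)
    _ = ∑' k, ∑' p : {p : {ℓ : List G // Good x y S ℓ} // p.1.length = k}, W ν p.1.1 :=
        tsum_congr (fun k => by
          refine (Equiv.tsum_eq (lenEquiv x y S k) (fun ℓ => W ν ℓ.1)).symm.trans (tsum_congr fun p => ?_)
          rfl)
    _ = ∑' z : Σ k : ℕ, {p : {ℓ : List G // Good x y S ℓ} // p.1.length = k}, W ν z.2.1.1 :=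
        by exact (ENNReal.tsum_sigma' (fun z : Σ k : ℕ, {p : {ℓ : List G // Good x y S ℓ} // p.1.length = k} => W ν z.2.1.1)).symm
    _ = LF ν x y S :=
        Equiv.tsum_eq (Equiv.sigmaFiberEquiv (fun p : {ℓ : List G // Good x y S ℓ} => p.1.length))
          (fun p => W ν p.1)

end Slice


section LeOne

/-- lists of fixed length `n+1` split as head and tail -/
def consEquiv (n : ℕ) : {ℓ : List G // ℓ.length = n + 1} ≃ G × {ℓ : List G // ℓ.length = n} where
  toFun p := match p with
    | ⟨[], h⟩ => absurd h (by simp)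
    | ⟨a :: t, h⟩ => (a, ⟨t, by simpa using h⟩)
  invFun q := ⟨q.1 :: q.2.1, by simp [q.2.2]⟩
  left_inv p := by
    obtain ⟨ℓ, hl⟩ := p
    cases ℓ with
    | nil => simp at hl
    | cons a t => rfl
  right_inv q := rfl

lemma tsum_len (ν : G → ℝ≥0∞) (hν : ∑' g, ν g = 1) :
    ∀ N : ℕ, ∑' ℓ : {ℓ : List G // ℓ.length = N}, W ν ℓ.1 = 1 := by
  intro N
  induction N with
  | zero =>
    rw [tsum_eq_single (⟨[], rfl⟩ : {ℓ : List G // ℓ.length = 0})]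
    · simp
    · intro b hb
      exact absurd (Subtype.ext (List.length_eq_zero_iff.mp b.2)) hb
  | succ n ih =>
    rw [← Equiv.tsum_eq (consEquiv n).symm (fun ℓ => W ν ℓ.1)]
    have : ∀ q : G × {ℓ : List G // ℓ.length = n},
        W ν (((consEquiv n).symm q).1) = ν q.1 * W ν q.2.1 := by
      intro q; rfl
    rw [tsum_congr this, ENNReal.tsum_prod']
    calc ∑' (a : G) (q : {ℓ : List G // ℓ.length = n}), ν a * W ν q.1
        = ∑' (a : G), ν a * ∑' q : {ℓ : List G // ℓ.length = n}, W ν q.1 :=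
          tsum_congr fun a => ENNReal.tsum_mul_left
      _ = ∑' (a : G), ν a * 1 := by rw [ih]
      _ = 1 := by simpa using hν

lemma pad_inj (x y : G) (S : Set G) (N : ℕ) :
    Function.Injective
      (fun z : Σ k : Fin N, ({ℓ : List G // ℓ.length = k.1 ∧ Good x y S ℓ} ×
          {ℓ : List G // ℓ.length = N - k.1}) =>
        (⟨z.2.1.1 ++ z.2.2.1, by
          rw [List.length_append, z.2.1.2.1, z.2.2.2]
          omega⟩ : {ℓ : List G // ℓ.length = N})) := by
  rintro ⟨k, ⟨p, hpl, hpg⟩, ⟨s, hs⟩⟩ ⟨k', ⟨p', hpl', hpg'⟩, ⟨s', hs'⟩⟩ hz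
  have hL : p ++ s = p' ++ s' := congrArg Subtype.val hz
  -- first, the lengths agree
  have key : ∀ (a a' b b' : List G), a ++ b = a' ++ b' →
      Good x y S a → Good x y S a' → a.length < a'.length → False := by
    intro a a' b b' hab ha ha' hlt
    have h1 : pos x a' a.length ≠ y := by
      have := ha'.2 a.length hlt
      simp only [Set.mem_union, Set.mem_singleton_iff, not_or] at this
      exact this.2
    apply h1
    have h2 : pos x a' a.length = pos x (a' ++ b') a.length :=
      (pos_append_left x b' (le_of_lt hlt)).symm
    rw [h2, ← hab, pos_append_left x b le_rfl, pos_length]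
    exact ha.1
  have hkk : (k : ℕ) = (k' : ℕ) := by
    by_contra hne
    rcases Nat.lt_or_ge (k : ℕ) (k' : ℕ) with hlt | hge
    · exact key p p' s s' hL hpg hpg' (by omega)
    · exact key p' p s' s hL.symm hpg' hpg (by omega)
  have hk2 : k = k' := Fin.ext hkk
  subst hk2
  have hlen : p.length = p'.length := by rw [hpl, hpl']
  obtain ⟨hp, hs2⟩ := List.append_inj hL hlen
  subst hp
  subst hs2
  rfl

lemma LF_le_one (ν : G → ℝ≥0∞) (hν : ∑' g, ν g = 1) (x y : G) (S : Set G) :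
    LF ν x y S ≤ 1 := by
  rw [← EFP_eq_LF]
  have hsl : ∀ k : ℕ, (∑' f : FPsub x y S k, ∏ j : Fin k, ν ((f.1 j.castSucc)⁻¹ * f.1 j.succ))
      = ∑' ℓ : {ℓ : List G // ℓ.length = k ∧ Good x y S ℓ}, W ν ℓ.1 := slice_tsum ν x y S
  rw [EFP, tsum_congr hsl]
  apply ENNReal.tsum_le_of_sum_range_le
  intro N
  -- rewrite the finite sum as a tsum over a sigma type
  have h1 : ∑ k ∈ Finset.range N, ∑' ℓ : {ℓ : List G // ℓ.length = k ∧ Good x y S ℓ}, W ν ℓ.1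
      = ∑' z : Σ k : Fin N, ({ℓ : List G // ℓ.length = k.1 ∧ Good x y S ℓ} ×
          {ℓ : List G // ℓ.length = N - k.1}), W ν z.2.1.1 * W ν z.2.2.1 := by
    rw [← Fin.sum_univ_eq_sum_range, ← tsum_fintype (L := SummationFilter.unconditional _)]
    rw [ENNReal.tsum_sigma' (fun z : Σ k : Fin N, ({ℓ : List G // ℓ.length = k.1 ∧ Good x y S ℓ} ×
          {ℓ : List G // ℓ.length = N - k.1}) => W ν z.2.1.1 * W ν z.2.2.1)]
    refine tsum_congr fun k => ?_
    rw [ENNReal.tsum_prod' (f := fun q : ({ℓ : List G // ℓ.length = k.1 ∧ Good x y S ℓ} ×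
          {ℓ : List G // ℓ.length = N - k.1}) => W ν q.1.1 * W ν q.2.1)]
    calc ∑' ℓ : {ℓ : List G // ℓ.length = k.1 ∧ Good x y S ℓ}, W ν ℓ.1
        = ∑' ℓ : {ℓ : List G // ℓ.length = k.1 ∧ Good x y S ℓ},
            W ν ℓ.1 * ∑' s : {ℓ : List G // ℓ.length = N - k.1}, W ν s.1 := by
          rw [tsum_len ν hν (N - k.1)]; simp
      _ = _ := tsum_congr fun ℓ => ENNReal.tsum_mul_left.symm
  rw [h1]
  calc ∑' z : Σ k : Fin N, ({ℓ : List G // ℓ.length = k.1 ∧ Good x y S ℓ} ×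
          {ℓ : List G // ℓ.length = N - k.1}), W ν z.2.1.1 * W ν z.2.2.1
      = ∑' z : Σ k : Fin N, ({ℓ : List G // ℓ.length = k.1 ∧ Good x y S ℓ} ×
          {ℓ : List G // ℓ.length = N - k.1}), W ν (z.2.1.1 ++ z.2.2.1) := by
        refine tsum_congr fun z => ?_; rw [W_append]
    _ ≤ ∑' ℓ : {ℓ : List G // ℓ.length = N}, W ν ℓ.1 :=
        ENNReal.tsum_comp_le_tsum_of_injective (pad_inj x y S N) (fun ℓ => W ν ℓ.1)
    _ = 1 := tsum_len ν hν N

end LeOne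


section Transfer

lemma FP_eq_toReal_LF (μ : G → ℝ) (hnn : ∀ g, 0 ≤ μ g)
    (hν : ∑' g, ENNReal.ofReal (μ g) = 1) (x y : G) (S : Set G) :
    FP μ x y S = (LF (fun g => ENNReal.ofReal (μ g)) x y S).toReal := by
  classical
  set ν : G → ℝ≥0∞ := fun g => ENNReal.ofReal (μ g) with hνdef
  have hprod_ne : ∀ (k : ℕ) (f : FPsub x y S k),
      (∏ j : Fin k, ν ((f.1 j.castSucc)⁻¹ * f.1 j.succ)) ≠ ∞ := by
    intro k f
    refine (ENNReal.prod_lt_top ?_).ne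
    intro j _
    exact ENNReal.ofReal_lt_top
  have hA_le : ∀ k : ℕ,
      (∑' f : FPsub x y S k, ∏ j : Fin k, ν ((f.1 j.castSucc)⁻¹ * f.1 j.succ)) ≤ 1 := by
    intro k
    calc (∑' f : FPsub x y S k, ∏ j : Fin k, ν ((f.1 j.castSucc)⁻¹ * f.1 j.succ))
        ≤ EFP ν x y S := ENNReal.le_tsum k
      _ = LF ν x y S := EFP_eq_LF ν x y S
      _ ≤ 1 := LF_le_one ν hν x y S
  have hA_ne : ∀ k : ℕ,
      (∑' f : FPsub x y S k, ∏ j : Fin k, ν ((f.1 j.castSucc)⁻¹ * f.1 j.succ)) ≠ ∞ :=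
    fun k => ne_top_of_le_ne_top ENNReal.one_ne_top (hA_le k)
  have inner : ∀ k : ℕ,
      (∑' f : FPsub x y S k, ∏ j : Fin k, μ ((f.1 j.castSucc)⁻¹ * f.1 j.succ))
      = (∑' f : FPsub x y S k, ∏ j : Fin k, ν ((f.1 j.castSucc)⁻¹ * f.1 j.succ)).toReal := by
    intro k
    rw [ENNReal.tsum_toReal_eq (hprod_ne k)]
    refine tsum_congr fun f => ?_
    rw [ENNReal.toReal_prod]
    refine Finset.prod_congr rfl fun j _ => ?_
    exact (ENNReal.toReal_ofReal (hnn _)).symm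
  show (∑' k : ℕ, ∑' f : FPsub x y S k, ∏ j : Fin k, μ ((f.1 j.castSucc)⁻¹ * f.1 j.succ)) = _
  rw [tsum_congr inner, ← ENNReal.tsum_toReal_eq hA_ne, ← EFP, EFP_eq_LF]

end Transfer


section Decomp

variable (x y : G) (B : Set G)

/-- the set of good paths that never touch `B` strictly before arrival -/
def hitFree : Set {ℓ : List G // Good x y ∅ ℓ} :=
  {p | ∀ i < p.1.length, pos x p.1 i ∉ B}

def hitFreeEquiv : ↥(hitFree x y B) ≃ {ℓ : List G // Good x y B ℓ} where
  toFun q := ⟨q.1.1, q.1.2.1, fun i hi => by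
    intro hmem
    rcases hmem with hB | hy
    · exact q.2 i hi hB
    · exact q.1.2.2 i hi (Or.inr hy)⟩
  invFun r := ⟨⟨r.1, r.2.1, fun i hi => by
      intro hmem
      rcases hmem with hB | hy
      · exact absurd hB (Set.notMem_empty _)
      · exact r.2.2 i hi (Or.inr hy)⟩,
    fun i hi hB => r.2.2 i hi (Or.inl hB)⟩
  left_inv q := rfl
  right_inv r := rfl

variable {x y B}

lemma concat_good {b : G} (hbB : b ∈ B) (hby : b ≠ y) {p q : List G}
    (hp : Good x b ((B ∪ {y}) \ {b}) p) (hq : Good b y ∅ q) : Good x y ∅ (p ++ q) := by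
  have hqne : q ≠ [] := by
    rintro rfl
    exact hby (by simpa using hq.1)
  constructor
  · rw [List.prod_append, ← mul_assoc, hp.1, hq.1]
  · intro i hi
    simp only [List.length_append] at hi
    rcases Nat.lt_or_ge i p.length with h | h
    · rw [pos_append_left x q (le_of_lt h)]
      intro hmem
      have hy : pos x p i = y := by simpa using hmem
      refine hp.2 i h (Or.inl ⟨Or.inr (by rw [hy]; rfl), ?_⟩)
      rw [hy]
      simpa using (Ne.symm hby)
    · have hi2 : i - p.length < q.length := by omega
      have heq : pos x (p ++ q) i = pos b q (i - p.length) := by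
        have h4 := pos_append_right x p q (i - p.length)
        rw [hp.1] at h4
        rw [← h4]
        congr 1
        omega
      rw [heq]
      exact hq.2 _ hi2

lemma concat_hit {b : G} (hbB : b ∈ B) (hby : b ≠ y) {p q : List G}
    (hp : Good x b ((B ∪ {y}) \ {b}) p) (hq : Good b y ∅ q) :
    ¬ ∀ i < (p ++ q).length, pos x (p ++ q) i ∉ B := by
  intro hall
  have hqne : q ≠ [] := by
    rintro rfl
    exact hby (by simpa using hq.1)
  have hlen : p.length < (p ++ q).length := by
    rw [List.length_append]
    have := List.length_pos_iff.mpr hqne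
    omega
  apply hall p.length hlen
  rw [pos_append_left x q le_rfl, pos_length, hp.1]
  exact hbB

lemma prefix_no_hit {b : G} (hby : b ≠ y) {p q : List G}
    (hp : Good x b ((B ∪ {y}) \ {b}) p) (hbB : b ∈ B) :
    ∀ i < p.length, pos x (p ++ q) i ∉ B := by
  intro i hi hB
  rw [pos_append_left x q (le_of_lt hi)] at hB
  by_cases hpb : pos x p i = b
  · exact hp.2 i hi (Or.inr hpb)
  · exact hp.2 i hi (Or.inl ⟨Or.inl hB, hpb⟩)

/-- decomposition map: (first hit `b`, path to `b`, path from `b`) ↦ concatenation -/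
noncomputable def hitMap :
    (Σ b : ↥(B \ {y}), ({ℓ : List G // Good x (b : G) ((B ∪ {y}) \ {(b : G)}) ℓ} ×
        {ℓ : List G // Good (b : G) y ∅ ℓ})) → ↥(hitFree x y B)ᶜ :=
  fun z => ⟨⟨z.2.1.1 ++ z.2.2.1, concat_good z.1.2.1 z.1.2.2 z.2.1.2 z.2.2.2⟩,
    concat_hit z.1.2.1 z.1.2.2 z.2.1.2 z.2.2.2⟩

lemma hitMap_bijective : Function.Bijective (hitMap (x := x) (y := y) (B := B)) := by
  constructor
  · rintro ⟨⟨b, hbm⟩, ⟨p, hp⟩, ⟨q, hq⟩⟩ ⟨⟨b', hbm'⟩, ⟨p', hp'⟩, ⟨q', hq'⟩⟩ hzz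
    have hbm1 := hbm
    have hbm1' := hbm'
    rw [Set.mem_diff, Set.mem_singleton_iff] at hbm1 hbm1'
    have hL : p ++ q = p' ++ q' := congrArg (fun w => w.1.1) hzz
    have hple : p.length = p'.length := by
      rcases Nat.lt_trichotomy p.length p'.length with hlt | heq | hgt
      · exfalso
        refine prefix_no_hit (q := q') hbm1'.2 hp' hbm1'.1 p.length hlt ?_
        rw [← hL, pos_append_left x q le_rfl, pos_length]
        have : x * p.prod = b := hp.1
        rw [this]
        exact hbm1.1
      · exact heq
      · exfalso
        refine prefix_no_hit (q := q) hbm1.2 hp hbm1.1 p'.length hgt ?_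
        rw [hL, pos_append_left x q' le_rfl, pos_length]
        have : x * p'.prod = b' := hp'.1
        rw [this]
        exact hbm1'.1
    obtain ⟨rfl, rfl⟩ := List.append_inj hL hple
    have hbb : b = b' := by
      have h1 : x * p.prod = b := hp.1
      have h2 : x * p.prod = b' := hp'.1
      rw [← h1, ← h2]
    subst hbb
    rfl
  · rintro ⟨⟨ℓ, hg⟩, hc⟩
    classical
    have hex : ∃ i, i < ℓ.length ∧ pos x ℓ i ∈ B := by
      by_contra hno
      push_neg at hno
      exact hc (fun i hi => hno i hi)
    set i0 := Nat.find hex with hi0def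
    have hspec : i0 < ℓ.length ∧ pos x ℓ i0 ∈ B := Nat.find_spec hex
    have hmin : ∀ j, j < i0 → ¬(j < ℓ.length ∧ pos x ℓ j ∈ B) := fun j hj => Nat.find_min hex hj
    have hbny : pos x ℓ i0 ≠ y := by
      have := hg.2 i0 hspec.1
      simpa using this
    have hp : Good x (pos x ℓ i0) ((B ∪ {y}) \ {pos x ℓ i0}) (ℓ.take i0) := by
      constructor
      · rfl
      · intro i hi
        have hii : i < i0 := by
          rw [List.length_take] at hi
          omega
        have hil : i < ℓ.length := by omega
        rw [pos_take x ℓ (le_of_lt hii)]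
        have hnB : pos x ℓ i ∉ B := fun hB => hmin i hii ⟨hil, hB⟩
        have hny : pos x ℓ i ≠ y := by simpa using hg.2 i hil
        intro hmem
        rcases hmem with ⟨hBy, _⟩ | hb
        · rcases hBy with hB | hyy
          · exact hnB hB
          · exact hny hyy
        · rw [Set.mem_singleton_iff] at hb
          rw [hb] at hnB
          exact hnB hspec.2
    have hq : Good (pos x ℓ i0) y ∅ (ℓ.drop i0) := by
      constructor
      · show pos x ℓ i0 * (ℓ.drop i0).prod = y
        rw [pos, mul_assoc, ← List.prod_append, List.take_append_drop]
        exact hg.1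
      · intro i hi
        rw [pos_drop x ℓ i0 i]
        have : i0 + i < ℓ.length := by
          rw [List.length_drop] at hi
          omega
        exact hg.2 (i0 + i) this
    refine ⟨⟨⟨pos x ℓ i0, hspec.2, hbny⟩, ⟨ℓ.take i0, hp⟩, ⟨ℓ.drop i0, hq⟩⟩, ?_⟩
    exact Subtype.ext (Subtype.ext (List.take_append_drop i0 ℓ))

lemma LF_decomp (ν : G → ℝ≥0∞) :
    LF ν x y ∅ = LF ν x y B +
      ∑' b : ↥(B \ {y}), LF ν x (b : G) ((B ∪ {y}) \ {(b : G)}) * LF ν (b : G) y ∅ := by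
  classical
  have hsplit := Summable.tsum_add_tsum_compl (s := hitFree x y B)
    (f := fun p : {ℓ : List G // Good x y ∅ ℓ} => W ν p.1)
    ENNReal.summable ENNReal.summable
  rw [LF, ← hsplit]
  congr 1
  · exact Equiv.tsum_eq (hitFreeEquiv x y B) (fun r => W ν r.1)
  · have hW : ∀ z, W ν ((hitMap (x := x) (y := y) (B := B)) z).1.1
        = W ν z.2.1.1 * W ν z.2.2.1 := by
      intro z
      show W ν (z.2.1.1 ++ z.2.2.1) = _
      rw [W_append]
    calc ∑' (p : ↥(hitFree x y B)ᶜ), W ν p.1.1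
        = ∑' z : Σ b : ↥(B \ {y}), ({ℓ : List G // Good x (b : G) ((B ∪ {y}) \ {(b : G)}) ℓ} ×
              {ℓ : List G // Good (b : G) y ∅ ℓ}),
            W ν ((Equiv.ofBijective _ (hitMap_bijective (x := x) (y := y) (B := B))) z).1.1 :=
          (Equiv.tsum_eq _ (fun p : ↥(hitFree x y B)ᶜ => W ν p.1.1)).symm
      _ = ∑' z : Σ b : ↥(B \ {y}), ({ℓ : List G // Good x (b : G) ((B ∪ {y}) \ {(b : G)}) ℓ} ×
              {ℓ : List G // Good (b : G) y ∅ ℓ}), W ν z.2.1.1 * W ν z.2.2.1 :=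
          tsum_congr (fun z => by exact hW z)
      _ = ∑' b : ↥(B \ {y}), LF ν x (b : G) ((B ∪ {y}) \ {(b : G)}) * LF ν (b : G) y ∅ := ?_
    rw [ENNReal.tsum_sigma' (fun z : Σ b : ↥(B \ {y}),
        ({ℓ : List G // Good x (b : G) ((B ∪ {y}) \ {(b : G)}) ℓ} ×
          {ℓ : List G // Good (b : G) y ∅ ℓ}) => W ν z.2.1.1 * W ν z.2.2.1)]
    refine tsum_congr fun b => ?_
    rw [ENNReal.tsum_prod' (f := fun q : ({ℓ : List G // Good x (b : G) ((B ∪ {y}) \ {(b : G)}) ℓ} ×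
          {ℓ : List G // Good (b : G) y ∅ ℓ}) => W ν q.1.1 * W ν q.2.1)]
    rw [LF, LF]
    calc ∑' (p : {ℓ : List G // Good x (b : G) ((B ∪ {y}) \ {(b : G)}) ℓ})
          (q : {ℓ : List G // Good (b : G) y ∅ ℓ}), W ν p.1 * W ν q.1
        = ∑' (p : {ℓ : List G // Good x (b : G) ((B ∪ {y}) \ {(b : G)}) ℓ}),
            W ν p.1 * ∑' (q : {ℓ : List G // Good (b : G) y ∅ ℓ}), W ν q.1 :=
          tsum_congr fun p => ENNReal.tsum_mul_left
      _ = _ := ENNReal.tsum_mul_right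

end Decomp


section Barrier

lemma LF_eq_indicator (ν : G → ℝ≥0∞) (x y : G) (S : Set G) :
    LF ν x y S = ∑' ℓ : List G, Set.indicator {ℓ : List G | Good x y S ℓ} (W ν) ℓ := by
  exact tsum_subtype {ℓ : List G | Good x y S ℓ} (W ν)

lemma LF_self (ν : G → ℝ≥0∞) (y : G) (S : Set G) : LF ν y y S = 1 := by
  have hnil : Good y y S ([] : List G) := by
    constructor
    · simp
    · intro i hi
      simp at hi
  rw [LF, tsum_eq_single (⟨[], hnil⟩ : {ℓ : List G // Good y y S ℓ})]
  · rfl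
  · rintro ⟨ℓ, hg⟩ hb
    exfalso
    apply hb
    apply Subtype.ext
    cases ℓ with
    | nil => rfl
    | cons a t =>
      exfalso
      have := hg.2 0 (by simp)
      rw [pos_zero] at this
      exact this (Or.inr rfl)

lemma LF_congr' (ν : G → ℝ≥0∞) (x y : G) {S S' : Set G} (h : S ∪ {y} = S' ∪ {y}) :
    LF ν x y S = LF ν x y S' := by
  have hg : ∀ ℓ : List G, Good x y S ℓ ↔ Good x y S' ℓ := by
    intro ℓ
    unfold Good
    rw [h]
  have hset : {ℓ : List G | Good x y S ℓ} = {ℓ : List G | Good x y S' ℓ} := by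
    ext ℓ
    exact hg ℓ
  rw [LF_eq_indicator, LF_eq_indicator, hset]

lemma LF_absorb (ν : G → ℝ≥0∞) {x y0 : G} {B : Set G} (hzero : LF ν x y0 B = 0)
    {b : G} (hbB : b ∈ B) :
    LF ν x b ((B ∪ {y0}) \ {b}) = LF ν x b (B \ {b}) := by
  classical
  rw [LF_eq_indicator, LF_eq_indicator]
  refine tsum_congr fun ℓ => ?_
  by_cases h1 : Good x b ((B ∪ {y0}) \ {b}) ℓ
  · have h2 : Good x b (B \ {b}) ℓ := by
      refine ⟨h1.1, fun i hi hmem => h1.2 i hi ?_⟩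
      rcases hmem with ⟨hB, hnb⟩ | hb2
      · exact Or.inl ⟨Or.inl hB, hnb⟩
      · exact Or.inr hb2
    rw [Set.indicator_of_mem (show ℓ ∈ {ℓ : List G | Good x b ((B ∪ {y0}) \ {b}) ℓ} from h1) (W ν),
      Set.indicator_of_mem (show ℓ ∈ {ℓ : List G | Good x b (B \ {b}) ℓ} from h2) (W ν)]
  · rw [Set.indicator_of_notMem (show ℓ ∉ {ℓ : List G | Good x b ((B ∪ {y0}) \ {b}) ℓ} from h1) (W ν)]
    by_cases h2 : Good x b (B \ {b}) ℓ
    · rw [Set.indicator_of_mem (show ℓ ∈ {ℓ : List G | Good x b (B \ {b}) ℓ} from h2) (W ν)]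
      have hex : ∃ i, i < ℓ.length ∧ pos x ℓ i = y0 := by
        by_contra hno
        push_neg at hno
        apply h1
        refine ⟨h2.1, fun i hi hmem => ?_⟩
        apply h2.2 i hi
        rcases hmem with ⟨hBy, hnb⟩ | hb2
        · rcases hBy with hB | hy
          · exact Or.inl ⟨hB, hnb⟩
          · exact absurd (by simpa using hy) (hno i hi)
        · exact Or.inr hb2
      set i0 := Nat.find hex with hi0def
      have hspec : i0 < ℓ.length ∧ pos x ℓ i0 = y0 := Nat.find_spec hex
      have hmin : ∀ j, j < i0 → ¬(j < ℓ.length ∧ pos x ℓ j = y0) :=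
        fun j hj => Nat.find_min hex hj
      have hpre : Good x y0 B (ℓ.take i0) := by
        constructor
        · exact hspec.2
        · intro i hi
          have hii : i < i0 := by
            rw [List.length_take] at hi
            omega
          have hil : i < ℓ.length := by omega
          rw [pos_take x ℓ (le_of_lt hii)]
          intro hmem
          rcases hmem with hB | hy
          · apply h2.2 i hil
            by_cases hpb : pos x ℓ i = b
            · exact Or.inr hpb
            · exact Or.inl ⟨hB, hpb⟩
          · exact hmin i hii ⟨hil, by simpa using hy⟩
      have hterm : W ν (ℓ.take i0) = 0 := by
        have hle := ENNReal.le_tsum (f := fun p : {ℓ : List G // Good x y0 B ℓ} => W ν p.1)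
          ⟨ℓ.take i0, hpre⟩
        rw [show (∑' p : {ℓ : List G // Good x y0 B ℓ}, W ν p.1) = LF ν x y0 B from rfl,
          hzero] at hle
        simpa using hle
      have hw : W ν ℓ = 0 := by
        have : W ν ℓ = W ν (ℓ.take i0) * W ν (ℓ.drop i0) := by
          rw [← W_append, List.take_append_drop]
        rw [this, hterm, zero_mul]
      rw [hw]
    · rw [Set.indicator_of_notMem (show ℓ ∉ {ℓ : List G | Good x b (B \ {b}) ℓ} from h2) (W ν)]

end Barrier

end Stmt7Aux

open Stmt7Aux

/-- Lemma 1: if `B` is a `g`-barrier then for every `h ∈ C_fin(g)`,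
`F_μ(e,h) = Σ_{b ∈ B} F_μ(e,b; B \ {b}) F_μ(b,h)`. -/
theorem stmt7 {m : ℕ} (μ : FreeGroup (Fin m) → ℝ) (hμ : IsProb μ)
    (g : FreeGroup (Fin m)) (hg : g ≠ 1) (B : Set (FreeGroup (Fin m)))
    (hB : IsBarrier μ g B) (h : FreeGroup (Fin m)) (hh : h ∈ Cfin g) :
    FP μ 1 h ∅ = ∑' b : B, FP μ 1 b (B \ {(b : FreeGroup (Fin m))}) * FP μ b h ∅ := by
  classical
  set ν : FreeGroup (Fin m) → ℝ≥0∞ := fun g => ENNReal.ofReal (μ g) with hνdef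
  have hnn := hμ.1
  have hsummable : Summable μ := by
    by_contra hns
    have := hμ.2
    rw [tsum_eq_zero_of_not_summable hns] at this
    norm_num at this
  have hν1 : ∑' g, ν g = 1 := by
    rw [hνdef, ← ENNReal.ofReal_tsum_of_nonneg hnn hsummable, hμ.2]
    simp
  have hFP : ∀ (x y : FreeGroup (Fin m)) (S : Set (FreeGroup (Fin m))),
      FP μ x y S = (LF ν x y S).toReal := fun x y S => FP_eq_toReal_LF μ hnn hν1 x y S
  have hLFfin : ∀ (x y : FreeGroup (Fin m)) (S : Set (FreeGroup (Fin m))), LF ν x y S ≠ ∞ :=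
    fun x y S => ne_top_of_le_ne_top ENNReal.one_ne_top (LF_le_one ν hν1 x y S)
  have hbar : LF ν 1 h B = 0 := by
    have h0 : FP μ 1 h B = 0 := hB h hh
    rw [hFP] at h0
    rcases (ENNReal.toReal_eq_zero_iff _).mp h0 with h1 | h1
    · exact h1
    · exact absurd h1 (hLFfin 1 h B)
  set f : FreeGroup (Fin m) → ℝ≥0∞ := fun b => LF ν 1 b (B \ {b}) * LF ν b h ∅ with hfdef
  have hfh : h ∈ B → f h = 0 := by
    intro hhB
    show LF ν 1 h (B \ {h}) * LF ν h h ∅ = 0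
    rw [LF_congr' ν 1 h (show (B \ {h}) ∪ {h} = B ∪ {h} by rw [Set.diff_union_self]),
      hbar, zero_mul]
  have key : (∑' b : B, f (b : FreeGroup (Fin m))) = LF ν 1 h ∅ := by
    have step1 : (∑' b : B, f (b : FreeGroup (Fin m)))
        = ∑' b : ↥(B \ {h}), f (b : FreeGroup (Fin m)) := by
      rw [tsum_subtype B f, tsum_subtype (B \ {h}) f]
      refine tsum_congr fun g' => ?_
      by_cases hgB : g' ∈ B
      · by_cases hgh : g' = h
        · subst hgh
          rw [Set.indicator_of_mem hgB f, Set.indicator_of_notMem (by simp) f, hfh hgB]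
        · rw [Set.indicator_of_mem hgB f, Set.indicator_of_mem (show g' ∈ B \ {h} from ⟨hgB, hgh⟩) f]
      · rw [Set.indicator_of_notMem hgB f,
          Set.indicator_of_notMem (fun hc => hgB hc.1) f]
    have step2 : (∑' b : ↥(B \ {h}), f (b : FreeGroup (Fin m)))
        = ∑' b : ↥(B \ {h}), LF ν 1 (b : FreeGroup (Fin m))
            ((B ∪ {h}) \ {(b : FreeGroup (Fin m))}) * LF ν (b : FreeGroup (Fin m)) h ∅ := by
      refine tsum_congr fun b => ?_
      show LF ν 1 (b : FreeGroup (Fin m)) (B \ {(b : FreeGroup (Fin m))}) * _ = _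
      rw [LF_absorb ν hbar b.2.1]
    rw [step1, step2, LF_decomp (x := (1 : FreeGroup (Fin m))) (y := h) (B := B) ν, hbar,
      zero_add]
  rw [hFP 1 h ∅, ← key, ENNReal.tsum_toReal_eq
    (fun b => ENNReal.mul_ne_top (hLFfin _ _ _) (hLFfin _ _ _))]
  refine tsum_congr fun b => ?_
  rw [ENNReal.toReal_mul, hFP 1 (b : FreeGroup (Fin m)) (B \ {(b : FreeGroup (Fin m))}),
    hFP (b : FreeGroup (Fin m)) h ∅]
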